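/- arXiv:1703.06513 — 5 statements merged into one kernel-verified Lean document; each statement's English description precedes it below -/
import Mathlib

section
/- For c, p, q in [0,1], the Bernoulli KL divergence satisfies d(c·p, c·q) ≤ c·d(p, q), where d(x,y) = x·log(x/y) + (1−x)·log((1−x)/(1−y)) (defined by continuous extension at the boundary). -/
open scoped BigOperators

/-- Bernoulli KL divergence `d(p,q)` with continuous extension to the boundary:
`⊤` when `q ∈ {0,1}` and `p ≠ q` there. -/
noncomputable def klBer (p q : ℝ) : EReal :=
  if (q = 0 ∧ p ≠ 0) ∨ (q = 1 ∧ p ≠ 1) then ⊤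
  else ((p * Real.log (p / q) + (1 - p) * Real.log ((1 - p) / (1 - q)) : ℝ) : EReal)

/-- Real-valued Bernoulli KL divergence formula (valid where finite). -/
noncomputable def klBerR (p q : ℝ) : ℝ :=
  p * Real.log (p / q) + (1 - p) * Real.log ((1 - p) / (1 - q))

/-- Two-term log-sum inequality specialized to equal second components. -/
lemma logsum_two (a b t : ℝ) (ha : 0 ≤ a) (hb : 0 ≤ b) (ht : 0 ≤ t)
    (hab : b = 0 → a = 0) :
    (a + t) * Real.log ((a + t) / (b + t)) ≤ a * Real.log (a / b) := by
  rcases eq_or_lt_of_le hb with hb0 | hb0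
  · have ha0 : a = 0 := hab hb0.symm
    subst ha0
    rw [← hb0]
    rcases eq_or_lt_of_le ht with ht0 | ht0
    · simp [← ht0]
    · rw [zero_add, div_self ht0.ne', Real.log_one, mul_zero, zero_mul]
  · rcases eq_or_lt_of_le ht with ht0 | ht0
    · simp [← ht0]
    · have hbt : 0 < b + t := by linarith
      have hat : 0 < a + t := by linarith
      set s := (a + t) / (b + t) with hs_def
      have hs : 0 < s := div_pos hat hbt
      have hsum : (b + t) * s = a + t := by
        rw [hs_def]; field_simp [hbt.ne']
      have key1 : t * Real.log s + (t - t * s) ≤ 0 := by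
        have := Real.log_le_sub_one_of_pos hs
        nlinarith
      have key2 : a * Real.log s + (a - b * s) ≤ a * Real.log (a / b) := by
        rcases eq_or_lt_of_le ha with ha0 | ha0
        · rw [← ha0]
          simp
          positivity
        · have hx : 0 < b * s / a := by positivity
          have hlog := Real.log_le_sub_one_of_pos hx
          have hrw : Real.log (b * s / a) = Real.log b + Real.log s - Real.log a := by
            rw [Real.log_div (by positivity) ha0.ne', Real.log_mul hb0.ne' hs.ne']
          have hrw2 : Real.log (a / b) = Real.log a - Real.log b :=
            Real.log_div ha0.ne' hb0.ne'
          rw [hrw] at hlog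
          rw [hrw2]
          have h3 : b * s / a * a = b * s := by field_simp
          nlinarith
      nlinarith

lemma klBerR_scaled (c p q : ℝ) (hc0 : 0 < c) (hc1 : c ≤ 1)
    (hp0 : 0 ≤ p) (hp1 : p ≤ 1) (hq0 : 0 ≤ q) (hq1 : q ≤ 1)
    (h1 : q = 1 → p = 1) :
    klBerR (c * p) (c * q) ≤ c * klBerR p q := by
  unfold klBerR
  have hdiv : c * p / (c * q) = p / q := mul_div_mul_left p q hc0.ne'
  rw [hdiv]
  have key := logsum_two (c * (1 - p)) (c * (1 - q)) (1 - c)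
      (by nlinarith) (by nlinarith) (by linarith)
      (fun h => by
        have hq' : q = 1 := by nlinarith
        have hp' := h1 hq'
        rw [hp']; ring)
  have e1 : c * (1 - p) + (1 - c) = 1 - c * p := by ring
  have e2 : c * (1 - q) + (1 - c) = 1 - c * q := by ring
  have e3 : c * (1 - p) / (c * (1 - q)) = (1 - p) / (1 - q) :=
    mul_div_mul_left _ _ hc0.ne'
  rw [e1, e2, e3] at key
  nlinarith [key]

theorem kl_scaling_upper (c p q : ℝ) (hc : c ∈ Set.Icc (0 : ℝ) 1)
    (hp : p ∈ Set.Icc (0 : ℝ) 1) (hq : q ∈ Set.Icc (0 : ℝ) 1) :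
    klBer (c * p) (c * q) ≤ (c : EReal) * klBer p q := by
  obtain ⟨hc0, hc1⟩ := hc
  obtain ⟨hp0, hp1⟩ := hp
  obtain ⟨hq0, hq1⟩ := hq
  rcases eq_or_lt_of_le hc0 with hc' | hc'
  · rw [← hc']
    have h0 : klBer (0 * p) (0 * q) = ((0 : ℝ) : EReal) := by
      simp [klBer]
    rw [h0, EReal.coe_zero, zero_mul]
  · by_cases htop : (q = 0 ∧ p ≠ 0) ∨ (q = 1 ∧ p ≠ 1)
    · have hrhs : klBer p q = ⊤ := by rw [klBer, if_pos htop]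
      rw [hrhs]
      rw [EReal.mul_top_of_pos (by exact_mod_cast hc' : (0 : EReal) < (c : ℝ))]
      exact le_top
    · have h' := htop
      push_neg at h'
      obtain ⟨h0, h1⟩ := h'
      have hltop : ¬((c * q = 0 ∧ c * p ≠ 0) ∨ (c * q = 1 ∧ c * p ≠ 1)) := by
        push_neg
        constructor
        · intro h
          have hq' : q = 0 := by
            rcases mul_eq_zero.mp h with h | h
            · exact absurd h hc'.ne'
            · exact h
          rw [h0 hq', mul_zero]
        · intro h
          have hq' : q = 1 := by nlinarith
          have hc'' : c = 1 := by nlinarith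
          rw [h1 hq', hc'', one_mul]
      rw [klBer, klBer, if_neg hltop, if_neg htop, ← EReal.coe_mul]
      exact EReal.coe_le_coe_iff.mpr
        (klBerR_scaled c p q hc' hc1 hp0 hp1 hq0 hq1 h1)
end

section
/- For c, p, q in [0,1], the Bernoulli KL divergence satisfies c·(1 − max(p,q))·d(p, q) ≤ d(c·p, c·q). -/
open scoped BigOperators

noncomputable def Fkl (a s : ℝ) : ℝ :=
  a * (Real.log a - Real.log s) + (1 - a) * (Real.log (1 - a) - Real.log (1 - s))

lemma Fkl_self (a : ℝ) : Fkl a a = 0 := by simp [Fkl]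

lemma hasDerivAt_Fkl (b s : ℝ) (h0 : s ≠ 0) (h1 : s ≠ 1) :
    HasDerivAt (fun x => Fkl b x) (-b/s + (1-b)/(1-s)) s := by
  have h1' : (1 : ℝ) - s ≠ 0 := sub_ne_zero.mpr (Ne.symm h1)
  have hl2 : HasDerivAt (fun x : ℝ => Real.log (1 - x)) ((1-s)⁻¹ * (-1)) s := by
    exact (Real.hasDerivAt_log h1').comp s ((hasDerivAt_id s).const_sub 1)
  have H : HasDerivAt (fun x => b * (Real.log b - Real.log x)
      + (1-b)*(Real.log (1-b) - Real.log (1-x)))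
      (b * (0 - s⁻¹) + (1-b) * (0 - ((1-s)⁻¹ * (-1)))) s :=
    (((hasDerivAt_const s (Real.log b)).sub (Real.hasDerivAt_log h0)).const_mul b).add
      (((hasDerivAt_const s (Real.log (1-b))).sub hl2).const_mul (1-b))
  have : HasDerivAt (fun x => Fkl b x) (b * (0 - s⁻¹) + (1-b) * (0 - ((1-s)⁻¹ * (-1)))) s := H
  convert this using 1
  field_simp
  ring


lemma hasDerivAt_Fkl_scaled (b c s : ℝ) (h0 : c*s ≠ 0) (h1 : c*s ≠ 1) :
    HasDerivAt (fun x => Fkl b (c*x)) ((-b/(c*s) + (1-b)/(1-c*s)) * c) s := by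
  have := (hasDerivAt_Fkl b (c*s) h0 h1).comp s ((hasDerivAt_id s).const_mul c)
  simpa [Function.comp_def] using this

lemma contOn_aux (b : ℝ) (φ : ℝ → ℝ) (hφ : Continuous φ) (S : Set ℝ)
    (h : b = 0 ∨ ∀ x ∈ S, φ x ≠ 0) :
    ContinuousOn (fun x => b * (Real.log b - Real.log (φ x))) S := by
  rcases h with rfl | h
  · simpa using continuousOn_const
  · exact continuousOn_const.mul (continuousOn_const.sub
      (Real.continuousOn_log.comp hφ.continuousOn (fun x hx => h x hx)))

lemma key_le (c p q : ℝ) (hc0 : 0 < c) (hc1 : c ≤ 1) (hp0 : 0 ≤ p) (hq1 : q < 1)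
    (hpq : p < q) : c * (1 - q) * Fkl p q ≤ Fkl (c*p) (c*q) := by
  set K := c * (1 - q) with hK
  set g : ℝ → ℝ := fun s => Fkl (c*p) (c*s) - K * Fkl p s with hg
  have hq0 : 0 < q := lt_of_le_of_lt hp0 hpq
  have hcont : ContinuousOn g (Set.Icc p q) := by
    have h1 : ContinuousOn (fun x => (c*p) * (Real.log (c*p) - Real.log (c*x)))
        (Set.Icc p q) := by
      apply contOn_aux _ _ (continuous_const.mul continuous_id)
      rcases eq_or_lt_of_le hp0 with h|h
      · exact Or.inl (by rw [← h, mul_zero])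
      · exact Or.inr (fun x hx => ne_of_gt (mul_pos hc0 (lt_of_lt_of_le h hx.1)))
    have h2 : ContinuousOn (fun x => (1-c*p) * (Real.log (1-c*p) - Real.log (1-c*x)))
        (Set.Icc p q) := by
      apply contOn_aux _ _ (continuous_const.sub (continuous_const.mul continuous_id))
      refine Or.inr (fun x hx => ?_)
      have hx0 : 0 ≤ x := le_trans hp0 hx.1
      have : c * x ≤ x := by nlinarith
      have : (0:ℝ) < 1 - c*x := by nlinarith [hx.2]
      exact ne_of_gt this
    have h3 : ContinuousOn (fun x => p * (Real.log p - Real.log x)) (Set.Icc p q) := by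
      apply contOn_aux _ _ continuous_id
      rcases eq_or_lt_of_le hp0 with h|h
      · exact Or.inl h.symm
      · exact Or.inr (fun x hx => ne_of_gt (lt_of_lt_of_le h hx.1))
    have h4 : ContinuousOn (fun x => (1-p) * (Real.log (1-p) - Real.log (1-x)))
        (Set.Icc p q) := by
      apply contOn_aux _ _ (continuous_const.sub continuous_id)
      exact Or.inr (fun x hx => ne_of_gt (by linarith [hx.2] : (0:ℝ) < 1 - x))
    have : g = fun x => ((c*p) * (Real.log (c*p) - Real.log (c*x))
        + (1-c*p) * (Real.log (1-c*p) - Real.log (1-c*x)))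
        - K * (p * (Real.log p - Real.log x) + (1-p) * (Real.log (1-p) - Real.log (1-x))) := by
      funext x; simp [hg, Fkl]
    rw [this]
    exact (h1.add h2).sub (continuousOn_const.mul (h3.add h4))
  have hderiv : ∀ x ∈ Set.Ioo p q, HasDerivAt g
      ((-(c*p)/(c*x) + (1-c*p)/(1-c*x)) * c - K * (-p/x + (1-p)/(1-x))) x := by
    intro x hx
    have hx0 : 0 < x := lt_of_le_of_lt hp0 hx.1
    have hx1 : x < 1 := lt_trans hx.2 hq1
    have hcx0 : c*x ≠ 0 := ne_of_gt (mul_pos hc0 hx0)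
    have hcx1 : c*x ≠ 1 := by nlinarith
    exact (hasDerivAt_Fkl_scaled (c*p) c x hcx0 hcx1).sub
      ((hasDerivAt_Fkl p x (ne_of_gt hx0) (ne_of_lt hx1)).const_mul K)
  have hmono : MonotoneOn g (Set.Icc p q) := by
    apply monotoneOn_of_deriv_nonneg (convex_Icc p q) hcont
    · intro x hx
      rw [interior_Icc] at hx
      exact (hderiv x hx).differentiableAt.differentiableWithinAt
    · intro x hx
      rw [interior_Icc] at hx
      rw [(hderiv x hx).deriv]
      have hx0 : 0 < x := lt_of_le_of_lt hp0 hx.1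
      have hx1 : x < 1 := lt_trans hx.2 hq1
      have hcx1 : c*x < 1 := by nlinarith
      have hcx0 : 0 < c*x := mul_pos hc0 hx0
      have hxne : x ≠ 0 := ne_of_gt hx0
      have h1x : (1:ℝ) - x ≠ 0 := by linarith
      have h1cx : (1:ℝ) - c*x ≠ 0 := by linarith
      have hcne : c ≠ 0 := ne_of_gt hc0
      have e : (-(c*p)/(c*x) + (1-c*p)/(1-c*x)) * c - K * (-p/x + (1-p)/(1-x))
          = (c*(x-p))/(x*(1-c*x)) - (K*(x-p))/(x*(1-x)) := by
        rw [hK]; field_simp; ring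
      rw [e, sub_nonneg, div_le_div_iff₀ (by nlinarith) (by nlinarith)]
      have h5 : (1-q)*(1-c*x) ≤ 1-x := by nlinarith [hx.2]
      have h6 : 0 ≤ c*(x-p)*x := by nlinarith [hx.1]
      rw [hK]
      nlinarith [mul_le_mul_of_nonneg_left h5 h6]
  have h0 : g p = 0 := by simp [hg, Fkl_self]
  have := hmono (Set.left_mem_Icc.mpr hpq.le) (Set.right_mem_Icc.mpr hpq.le) hpq.le
  rw [h0] at this
  simp only [hg] at this
  linarith

lemma key_ge (c p q : ℝ) (hc0 : 0 < c) (hc1 : c ≤ 1) (hp1 : p ≤ 1) (hq0 : 0 < q)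
    (hqp : q < p) : c * (1 - p) * Fkl p q ≤ Fkl (c*p) (c*q) := by
  set K := c * (1 - p) with hK
  set g : ℝ → ℝ := fun s => Fkl (c*p) (c*s) - K * Fkl p s with hg
  have hp0 : 0 < p := lt_trans hq0 hqp
  have hcont : ContinuousOn g (Set.Icc q p) := by
    have h1 : ContinuousOn (fun x => (c*p) * (Real.log (c*p) - Real.log (c*x)))
        (Set.Icc q p) := by
      apply contOn_aux _ _ (continuous_const.mul continuous_id)
      exact Or.inr (fun x hx => ne_of_gt (mul_pos hc0 (lt_of_lt_of_le hq0 hx.1)))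
    have h2 : ContinuousOn (fun x => (1-c*p) * (Real.log (1-c*p) - Real.log (1-c*x)))
        (Set.Icc q p) := by
      apply contOn_aux _ _ (continuous_const.sub (continuous_const.mul continuous_id))
      rcases eq_or_lt_of_le (show c*p ≤ 1 by nlinarith) with h|h
      · exact Or.inl (by rw [h, sub_self])
      · refine Or.inr (fun x hx => ?_)
        have hx0 : 0 ≤ x := le_of_lt (lt_of_lt_of_le hq0 hx.1)
        have : c * x ≤ c * p := by nlinarith [hx.2]
        exact ne_of_gt (by linarith : (0:ℝ) < 1 - c*x)
    have h3 : ContinuousOn (fun x => p * (Real.log p - Real.log x)) (Set.Icc q p) := by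
      apply contOn_aux _ _ continuous_id
      exact Or.inr (fun x hx => ne_of_gt (lt_of_lt_of_le hq0 hx.1))
    have h4 : ContinuousOn (fun x => (1-p) * (Real.log (1-p) - Real.log (1-x)))
        (Set.Icc q p) := by
      apply contOn_aux _ _ (continuous_const.sub continuous_id)
      rcases eq_or_lt_of_le hp1 with h|h
      · exact Or.inl (by rw [h, sub_self])
      · exact Or.inr (fun x hx => ne_of_gt (by linarith [hx.2] : (0:ℝ) < 1 - x))
    have : g = fun x => ((c*p) * (Real.log (c*p) - Real.log (c*x))
        + (1-c*p) * (Real.log (1-c*p) - Real.log (1-c*x)))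
        - K * (p * (Real.log p - Real.log x) + (1-p) * (Real.log (1-p) - Real.log (1-x))) := by
      funext x; simp [hg, Fkl]
    rw [this]
    exact (h1.add h2).sub (continuousOn_const.mul (h3.add h4))
  have hderiv : ∀ x ∈ Set.Ioo q p, HasDerivAt g
      ((-(c*p)/(c*x) + (1-c*p)/(1-c*x)) * c - K * (-p/x + (1-p)/(1-x))) x := by
    intro x hx
    have hx0 : 0 < x := lt_trans hq0 hx.1
    have hx1 : x < 1 := lt_of_lt_of_le hx.2 hp1
    have hcx0 : c*x ≠ 0 := ne_of_gt (mul_pos hc0 hx0)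
    have hcx1 : c*x ≠ 1 := by nlinarith
    exact (hasDerivAt_Fkl_scaled (c*p) c x hcx0 hcx1).sub
      ((hasDerivAt_Fkl p x (ne_of_gt hx0) (ne_of_lt hx1)).const_mul K)
  have hmono : AntitoneOn g (Set.Icc q p) := by
    apply antitoneOn_of_deriv_nonpos (convex_Icc q p) hcont
    · intro x hx
      rw [interior_Icc] at hx
      exact (hderiv x hx).differentiableAt.differentiableWithinAt
    · intro x hx
      rw [interior_Icc] at hx
      rw [(hderiv x hx).deriv]
      have hx0 : 0 < x := lt_trans hq0 hx.1
      have hx1 : x < 1 := lt_of_lt_of_le hx.2 hp1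
      have hcx1 : c*x < 1 := by nlinarith
      have hcx0 : 0 < c*x := mul_pos hc0 hx0
      have hxne : x ≠ 0 := ne_of_gt hx0
      have h1x : (1:ℝ) - x ≠ 0 := by linarith
      have h1cx : (1:ℝ) - c*x ≠ 0 := by linarith
      have hcne : c ≠ 0 := ne_of_gt hc0
      have e : (-(c*p)/(c*x) + (1-c*p)/(1-c*x)) * c - K * (-p/x + (1-p)/(1-x))
          = (c*(x-p))/(x*(1-c*x)) - (K*(x-p))/(x*(1-x)) := by
        rw [hK]; field_simp; ring
      rw [e, sub_nonpos, div_le_div_iff₀ (by nlinarith) (by nlinarith)]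
      have h5 : (1-p)*(1-c*x) ≤ 1-x := by nlinarith [hx.2]
      have h6 : 0 ≤ c*(p-x)*x := by nlinarith [hx.2]
      rw [hK]
      nlinarith [mul_le_mul_of_nonneg_left h5 h6]
  have h0 : g p = 0 := by simp [hg, Fkl_self]
  have := hmono (Set.left_mem_Icc.mpr hqp.le) (Set.right_mem_Icc.mpr hqp.le) hqp.le
  rw [h0] at this
  simp only [hg] at this
  linarith

lemma klBerR_eq_Fkl (a s : ℝ) (hs0 : s ≠ 0) (hs1 : s ≠ 1) : klBerR a s = Fkl a s := by
  have h1 : a * Real.log (a / s) = a * (Real.log a - Real.log s) := by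
    rcases eq_or_ne a 0 with rfl | ha
    · simp
    · rw [Real.log_div ha hs0]
  have h2 : (1 - a) * Real.log ((1 - a) / (1 - s)) = (1 - a) * (Real.log (1 - a) - Real.log (1 - s)) := by
    rcases eq_or_ne a 1 with rfl | ha
    · simp
    · rw [Real.log_div (sub_ne_zero.mpr (Ne.symm ha)) (sub_ne_zero.mpr (Ne.symm hs1))]
  rw [klBerR, Fkl, h1, h2]

lemma log_term_ge (x y : ℝ) (hx : 0 ≤ x) (hy : 0 < y) : x - y ≤ x * Real.log (x / y) := by
  rcases eq_or_lt_of_le hx with h | hx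
  · rw [← h]; simp; linarith
  · have h := Real.log_le_sub_one_of_pos (show 0 < y/x by positivity)
    have hlog : Real.log (x/y) = - Real.log (y/x) := by
      rw [← Real.log_inv]
      congr 1
      rw [inv_div]
    rw [hlog]
    have := mul_le_mul_of_nonneg_left h hx.le
    have hyx : x * (y/x) = y := by field_simp
    nlinarith
lemma klBerR_nonneg (a b : ℝ) (ha0 : 0 ≤ a) (ha1 : a ≤ 1) (hb0 : 0 < b) (hb1 : b < 1) :
    0 ≤ klBerR a b := by
  have h1 := log_term_ge a b ha0 hb0
  have h2 := log_term_ge (1-a) (1-b) (by linarith) (by linarith)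
  rw [klBerR]
  linarith

lemma key (c p q : ℝ) (hc0 : 0 < c) (hc1 : c ≤ 1) (hp0 : 0 ≤ p) (hp1 : p ≤ 1)
    (hq0 : 0 < q) (hq1 : q < 1) :
    c * (1 - max p q) * klBerR p q ≤ klBerR (c*p) (c*q) := by
  have hcq0 : 0 < c*q := mul_pos hc0 hq0
  have hcq1 : c*q < 1 := by nlinarith
  rw [klBerR_eq_Fkl p q (ne_of_gt hq0) (ne_of_lt hq1),
    klBerR_eq_Fkl _ _ (ne_of_gt hcq0) (ne_of_lt hcq1)]
  rcases lt_trichotomy p q with h|h|h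
  · rw [max_eq_right h.le]; exact key_le c p q hc0 hc1 hp0 hq1 h
  · subst h; simp [Fkl_self]
  · rw [max_eq_left h.le]; exact key_ge c p q hc0 hc1 hp1 hq0 h

theorem kl_scaling_lower (c p q : ℝ) (hc : c ∈ Set.Icc (0 : ℝ) 1)
    (hp : p ∈ Set.Icc (0 : ℝ) 1) (hq : q ∈ Set.Icc (0 : ℝ) 1) :
    ((c * (1 - max p q) : ℝ) : EReal) * klBer p q ≤ klBer (c * p) (c * q) := by
  obtain ⟨hc0, hc1⟩ := hc
  obtain ⟨hp0, hp1⟩ := hp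
  obtain ⟨hq0, hq1⟩ := hq
  rcases eq_or_lt_of_le hc0 with h | hcpos
  · -- c = 0
    rw [← h]
    have h1 : klBer ((0:ℝ)*p) ((0:ℝ)*q) = (0:EReal) := by
      norm_num [klBer]
    rw [h1]
    norm_num
  · by_cases hq0' : q = 0
    · subst hq0'
      by_cases hp0' : p = 0
      · subst hp0'
        have h1 : klBer (c*0) (c*0) = (0:EReal) := by norm_num [klBer]
        have h2 : klBer 0 0 = (0:EReal) := by norm_num [klBer]
        rw [h1, h2, mul_zero]
      · have : klBer (c*p) (c*0) = ⊤ := by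
          rw [klBer, if_pos]
          exact Or.inl ⟨by ring, mul_ne_zero (ne_of_gt hcpos) hp0'⟩
        rw [this]; exact le_top
    · by_cases hq1' : q = 1
      · subst hq1'
        have hcoef : ((c * (1 - max p 1) : ℝ) : EReal) = 0 := by
          rw [max_eq_right hp1]
          norm_num
        rw [hcoef, zero_mul]
        rcases eq_or_lt_of_le hc1 with h1 | h1
        · -- c = 1
          rw [h1]
          by_cases hp1' : p = 1
          · subst hp1'
            norm_num [klBer]
          · rw [klBer, if_pos (Or.inr ⟨mul_one 1, by simpa using hp1'⟩)]
            exact le_top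
        · -- c < 1
          have hne : ¬ ((c*1 = 0 ∧ c*p ≠ 0) ∨ (c*1 = 1 ∧ c*p ≠ 1)) := by
            rintro (⟨h2, _⟩ | ⟨h2, _⟩)
            · rw [mul_one] at h2; exact (ne_of_gt hcpos) h2
            · rw [mul_one] at h2; exact (ne_of_lt h1) h2
          rw [klBer, if_neg hne]
          have : (0:ℝ) ≤ klBerR (c*p) (c*1) :=
            klBerR_nonneg _ _ (by positivity) (by nlinarith) (by nlinarith) (by nlinarith)
          exact_mod_cast EReal.coe_le_coe_iff.mpr this
      · -- 0 < q < 1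
        have hq0'' : 0 < q := lt_of_le_of_ne hq0 (Ne.symm hq0')
        have hq1'' : q < 1 := lt_of_le_of_ne hq1 hq1'
        have hcq0 : c*q ≠ 0 := ne_of_gt (mul_pos hcpos hq0'')
        have hcq1 : c*q ≠ 1 := ne_of_lt (by nlinarith)
        rw [klBer, if_neg (by rintro (⟨h, _⟩ | ⟨h, _⟩); exacts [hq0' h, hq1' h]),
          klBer, if_neg (by rintro (⟨h, _⟩ | ⟨h, _⟩); exacts [hcq0 h, hcq1 h]),
          ← EReal.coe_mul]
        exact EReal.coe_le_coe_iff.mpr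
          (key c p q hcpos hc1 hp0 hp1 hq0'' hq1'')
end

section
/- Let p ∈ [0,1] and fix Δ with 0 < Δ and p + Δ/2 ≤ 1, and let c ∈ [μ, 1] with μ > 0. Suppose additionally that max(p + Δ/4, p + Δ/2) ≤ p_max ≤ 1 and let γ = max(μ, 1 − p_max). Then d(c·(p + Δ/4), c·(p + Δ/2)) ≥ μ·γ·Δ²/8. -/
open scoped BigOperators

lemma klBerR_lower (x y r : ℝ) (hx : 0 < x) (hxy : x ≤ y) (hy : y < 1)
    (hr : 0 ≤ r) (hM : ∀ t ∈ Set.Icc x y, r * (t * (1 - t)) ≤ 1) :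
    r * (y - x) ^ 2 / 2 ≤ klBerR x y := by
  have hx1 : x < 1 := lt_of_le_of_lt hxy hy
  set F : ℝ → ℝ := fun t => x * (Real.log x - Real.log t)
    + (1 - x) * (Real.log (1 - x) - Real.log (1 - t)) - r * (t - x) ^ 2 / 2 with hF
  have hderiv : ∀ t ∈ Set.Icc x y, HasDerivAt F ((t - x) / (t * (1 - t)) - r * (t - x)) t := by
    intro t ht
    have ht0 : 0 < t := lt_of_lt_of_le hx ht.1
    have ht1 : t < 1 := lt_of_le_of_lt ht.2 hy
    have htne : t ≠ 0 := ht0.ne'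
    have ht1ne : (1 : ℝ) - t ≠ 0 := by linarith
    have h1 : HasDerivAt (fun t : ℝ => Real.log t) (1 / t) t := by
      simpa using Real.hasDerivAt_log htne
    have h2 : HasDerivAt (fun t : ℝ => Real.log (1 - t)) (-(1 / (1 - t))) t := by
      have := (Real.hasDerivAt_log (x := 1 - t) ht1ne).comp t
        ((hasDerivAt_id t).const_sub 1)
      simpa [mul_comm, div_eq_mul_inv, Function.comp_def] using this
    have hpow : HasDerivAt (fun t : ℝ => r * (t - x) ^ 2 / 2) (r * (t - x)) t := by
      have := ((((hasDerivAt_id t).sub_const x).pow 2).const_mul r).div_const 2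
      convert this using 1
      · rfl
      · rfl
      · simp
      simp
      ring
    have h3 : HasDerivAt F
        (x * (0 - 1 / t) + (1 - x) * (0 - -(1 / (1 - t))) - r * (t - x)) t :=
      (((((hasDerivAt_const t (Real.log x)).sub h1).const_mul x).add
        (((hasDerivAt_const t (Real.log (1 - x))).sub h2).const_mul (1 - x))).sub hpow)
    convert h3 using 1
    field_simp
    ring
  have hcont : ContinuousOn F (Set.Icc x y) := fun t ht =>
    (hderiv t ht).continuousAt.continuousWithinAt
  have hmono : MonotoneOn F (Set.Icc x y) := by
    apply monotoneOn_of_deriv_nonneg (convex_Icc x y) hcont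
    · exact fun t ht => (hderiv t (interior_subset ht)).differentiableAt.differentiableWithinAt
    · intro t ht
      rw [interior_Icc] at ht
      have ht' : t ∈ Set.Icc x y := Set.mem_Icc.2 ⟨le_of_lt ht.1, le_of_lt ht.2⟩
      rw [(hderiv t ht').deriv]
      have ht0 : 0 < t := lt_of_lt_of_le hx ht'.1
      have ht1 : t < 1 := lt_of_le_of_lt ht'.2 hy
      have hprod : 0 < t * (1 - t) := mul_pos ht0 (by linarith)
      have hrle : r ≤ 1 / (t * (1 - t)) := by
        rw [le_div_iff₀ hprod]; exact hM t ht'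
      have htx : 0 ≤ t - x := by linarith [ht.1]
      have heq : (t - x) / (t * (1 - t)) - r * (t - x) = (t - x) * (1 / (t * (1 - t)) - r) := by
        field_simp
      rw [heq]
      exact mul_nonneg htx (by linarith)
  have hFx : F x = 0 := by simp [hF]
  have key : 0 ≤ F y := by
    rw [← hFx]
    exact hmono (Set.left_mem_Icc.2 hxy) (Set.right_mem_Icc.2 hxy) hxy
  have hy0 : 0 < y := lt_of_lt_of_le hx hxy
  have hlog1 : Real.log (x / y) = Real.log x - Real.log y := Real.log_div hx.ne' hy0.ne'
  have hlog2 : Real.log ((1 - x) / (1 - y)) = Real.log (1 - x) - Real.log (1 - y) :=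
    Real.log_div (by linarith) (by linarith)
  unfold klBerR
  rw [hlog1, hlog2]
  simp only [hF] at key
  linarith

lemma kl_gap_aux (a b c μ γ : ℝ) (ha0 : 0 < a) (hab : a < b) (hb1 : b ≤ 1)
    (hμ : 0 < μ) (hμc : μ ≤ c) (hc1 : c ≤ 1) (hγ0 : 0 < γ)
    (hγ : γ ≤ c ∨ γ ≤ 1 - b) (hcb : c * b < 1) :
    2 * μ * γ * (b - a) ^ 2 ≤ klBerR (c * a) (c * b) := by
  have hc0 : 0 < c := lt_of_lt_of_le hμ hμc
  have hx0 : 0 < c * a := mul_pos hc0 ha0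
  have hxy : c * a ≤ c * b := by nlinarith
  have hr0 : (0 : ℝ) ≤ 4 * γ / c := by positivity
  have hbound : ∀ t ∈ Set.Icc (c * a) (c * b), (4 * γ / c) * (t * (1 - t)) ≤ 1 := by
    intro t ht
    have ht0 : 0 < t := lt_of_lt_of_le hx0 ht.1
    have hty : t ≤ c * b := ht.2
    have ht1 : t < 1 := lt_of_le_of_lt hty hcb
    rw [div_mul_eq_mul_div, div_le_one hc0]
    rcases hγ with hm | hm
    · nlinarith [sq_nonneg (1 - 2 * t)]
    · have hb0 : 0 < b := lt_trans ha0 hab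
      have s1 : t * (1 - t) ≤ t := by nlinarith
      have s2 : 4 * γ * (t * (1 - t)) ≤ 4 * γ * t := by nlinarith
      have s3 : 4 * γ * t ≤ 4 * γ * (c * b) := by nlinarith
      have s4 : 4 * γ * (c * b) ≤ 4 * (1 - b) * (c * b) := by nlinarith
      have s5 : 4 * (1 - b) * (c * b) ≤ c := by nlinarith [sq_nonneg (1 - 2 * b)]
      linarith
  have hkl := klBerR_lower (c * a) (c * b) (4 * γ / c) hx0 hxy hcb hr0 hbound
  have hfinal : 2 * μ * γ * (b - a) ^ 2 ≤ (4 * γ / c) * (c * b - c * a) ^ 2 / 2 := by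
    have heq : (4 * γ / c) * (c * b - c * a) ^ 2 / 2 = 2 * c * γ * (b - a) ^ 2 := by
      field_simp; ring
    rw [heq]
    nlinarith [mul_nonneg (mul_nonneg (sub_nonneg.2 hμc) hγ0.le) (sq_nonneg (b - a))]
  linarith

theorem kl_gap_estimate (p Δ μ c pmax γ : ℝ) (hp : p ∈ Set.Icc (0 : ℝ) 1)
    (hΔ : 0 < Δ) (hpΔ : p + Δ / 2 ≤ 1) (hμ : 0 < μ) (hc : c ∈ Set.Icc μ 1)
    (hpmax : max (p + Δ / 4) (p + Δ / 2) ≤ pmax) (hpmax1 : pmax ≤ 1)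
    (hγ : γ = max μ (1 - pmax)) :
    ((μ * γ * Δ ^ 2 / 8 : ℝ) : EReal) ≤ klBer (c * (p + Δ / 4)) (c * (p + Δ / 2)) := by
  obtain ⟨hp0, hp1⟩ := hp
  obtain ⟨hμc, hc1⟩ := hc
  have hc0 : 0 < c := lt_of_lt_of_le hμ hμc
  have ha0 : 0 < p + Δ / 4 := by linarith
  have hab : p + Δ / 4 < p + Δ / 2 := by linarith
  have hbpmax : p + Δ / 2 ≤ pmax := le_trans (le_max_right _ _) hpmax
  have hx0 : 0 < c * (p + Δ / 4) := mul_pos hc0 ha0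
  have hxy : c * (p + Δ / 4) < c * (p + Δ / 2) := (mul_lt_mul_iff_right₀ hc0).2 hab
  have hy1 : c * (p + Δ / 2) ≤ 1 := by nlinarith
  have hγ0 : 0 < γ := hγ ▸ lt_of_lt_of_le hμ (le_max_left _ _)
  unfold klBer
  split_ifs with h
  · exact le_top
  · push_neg at h
    have hyne1 : c * (p + Δ / 2) ≠ 1 := by
      intro hy
      have hx1 := h.2 hy
      rw [hy, hx1] at hxy
      exact lt_irrefl 1 hxy
    have hylt1 : c * (p + Δ / 2) < 1 := lt_of_le_of_ne hy1 hyne1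
    have hγcases : γ ≤ c ∨ γ ≤ 1 - (p + Δ / 2) := by
      rcases max_choice μ (1 - pmax) with hm | hm
      · left; rw [hγ, hm]; exact hμc
      · right; rw [hγ, hm]; linarith
    have := kl_gap_aux (p + Δ / 4) (p + Δ / 2) c μ γ ha0 hab hpΔ hμ hμc hc1 hγ0
      hγcases hylt1
    have heq : 2 * μ * γ * ((p + Δ / 2) - (p + Δ / 4)) ^ 2 = μ * γ * Δ ^ 2 / 8 := by ring
    rw [heq] at this
    exact_mod_cast EReal.coe_le_coe_iff.2 (by unfold klBerR at this; exact this)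
end

section
/- Let c ∈ [μ, 1] with μ ∈ (0,1], let u ∈ [0,1] and Δ ∈ (0, 1−u] with u + Δ/2 ≤ p_max ≤ 1, and set γ = max(μ, 1 − p_max). If X̄ is the average of N i.i.d. [0,1]-valued random variables with mean c·u, then P(X̄ > c·(u + Δ/4)) ≤ exp(−N·μ·γ·Δ²/8). -/
open scoped BigOperators

lemma klBer_quad_lower {q p V : ℝ} (hq : 0 < q) (hqp : q ≤ p) (hp1 : p < 1) (hV : 0 < V)
    (hVb : ∀ x ∈ Set.Icc q p, x * (1 - x) ≤ V) :
    (p - q) ^ 2 / (2 * V) ≤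
      p * (Real.log p - Real.log q) + (1 - p) * (Real.log (1 - p) - Real.log (1 - q)) := by
  set g : ℝ → ℝ := fun x => (Real.log x - Real.log q) - (Real.log (1 - x) - Real.log (1 - q))
      - (x - q) / V with hgdef
  set f : ℝ → ℝ := fun x => x * (Real.log x - Real.log q)
      + (1 - x) * (Real.log (1 - x) - Real.log (1 - q)) - (x - q) ^ 2 / (2 * V) with hfdef
  have hsub : Set.Icc q p ⊆ Set.Ioo (0 : ℝ) 1 := fun x hx =>
    ⟨lt_of_lt_of_le hq hx.1, lt_of_le_of_lt hx.2 hp1⟩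
  -- derivative of g
  have hgd : ∀ x ∈ Set.Ioo (0 : ℝ) 1, HasDerivAt g (x⁻¹ + (1 - x)⁻¹ - V⁻¹) x := by
    intro x hx
    have hx0 : x ≠ 0 := ne_of_gt hx.1
    have h1x : (1 : ℝ) - x ≠ 0 := by have := hx.2; intro h; linarith [h]
    have hlog : HasDerivAt (fun y : ℝ => Real.log y) x⁻¹ x := Real.hasDerivAt_log hx0
    have hinner : HasDerivAt (fun y : ℝ => 1 - y) (-1 : ℝ) x := by
      simpa using (hasDerivAt_id x).const_sub 1
    have hlog1x : HasDerivAt (fun y : ℝ => Real.log (1 - y)) ((1 - x)⁻¹ * (-1)) x :=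
      (Real.hasDerivAt_log h1x).comp x hinner
    have hlin : HasDerivAt (fun y : ℝ => (y - q) / V) V⁻¹ x := by
      simpa [div_eq_mul_inv] using ((hasDerivAt_id x).sub_const q).mul_const V⁻¹
    have := ((hlog.sub_const (Real.log q)).sub (hlog1x.sub_const (Real.log (1 - q)))).sub hlin
    refine this.congr_deriv ?_
    ring
  -- derivative of f
  have hfd : ∀ x ∈ Set.Ioo (0 : ℝ) 1, HasDerivAt f (g x) x := by
    intro x hx
    have hx0 : x ≠ 0 := ne_of_gt hx.1
    have h1x : (1 : ℝ) - x ≠ 0 := by have := hx.2; intro h; linarith [h]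
    have hlog : HasDerivAt (fun y : ℝ => Real.log y) x⁻¹ x := Real.hasDerivAt_log hx0
    have hinner : HasDerivAt (fun y : ℝ => 1 - y) (-1 : ℝ) x := by
      simpa using (hasDerivAt_id x).const_sub 1
    have hlog1x : HasDerivAt (fun y : ℝ => Real.log (1 - y)) ((1 - x)⁻¹ * (-1)) x :=
      (Real.hasDerivAt_log h1x).comp x hinner
    have h1 : HasDerivAt (fun y : ℝ => y * (Real.log y - Real.log q))
        (1 * (Real.log x - Real.log q) + x * x⁻¹) x :=
      (hasDerivAt_id x).mul (hlog.sub_const (Real.log q))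
    have h2 : HasDerivAt (fun y : ℝ => (1 - y) * (Real.log (1 - y) - Real.log (1 - q)))
        ((-1) * (Real.log (1 - x) - Real.log (1 - q)) + (1 - x) * ((1 - x)⁻¹ * (-1))) x :=
      hinner.mul (hlog1x.sub_const (Real.log (1 - q)))
    have h3 : HasDerivAt (fun y : ℝ => (y - q) ^ 2 / (2 * V)) (2 * (x - q) / (2 * V)) x := by
      have := (((hasDerivAt_id x).sub_const q).pow 2).div_const (2 * V)
      simpa using this
    have := (h1.add h2).sub h3
    refine this.congr_deriv ?_
    rw [hgdef]
    have hxinv : x * x⁻¹ = 1 := mul_inv_cancel₀ hx0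
    have h1xinv : (1 - x) * (1 - x)⁻¹ = 1 := mul_inv_cancel₀ h1x
    field_simp
    ring
  -- g is nonneg on [q,p]
  have hgq : g q = 0 := by simp [hgdef]
  have hgmono : MonotoneOn g (Set.Icc q p) := by
    apply monotoneOn_of_deriv_nonneg (convex_Icc q p)
    · intro x hx
      exact (hgd x (hsub hx)).continuousAt.continuousWithinAt
    · intro x hx
      rw [interior_Icc] at hx
      exact (hgd x (hsub (Set.mem_Icc_of_Ioo hx))).differentiableAt.differentiableWithinAt
    · intro x hx
      rw [interior_Icc] at hx
      have hx' := hsub (Set.mem_Icc_of_Ioo hx)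
      have hxm := Set.mem_Icc_of_Ioo hx
      rw [(hgd x (hsub (Set.mem_Icc_of_Ioo hx))).deriv]
      have hx0 : (0 : ℝ) < x := lt_of_lt_of_le hq hxm.1
      have h1x : (0 : ℝ) < 1 - x := by have := lt_of_le_of_lt hxm.2 hp1; linarith
      have hVx : x * (1 - x) ≤ V := hVb x hxm
      have hsum : x⁻¹ + (1 - x)⁻¹ = (x * (1 - x))⁻¹ := by
        field_simp
        ring
      rw [hsum, sub_nonneg]
      gcongr
  have hgnn : ∀ x ∈ Set.Icc q p, 0 ≤ g x := by
    intro x hx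
    have := hgmono (Set.left_mem_Icc.2 hqp) hx hx.1
    rwa [hgq] at this
  -- f is monotone on [q,p]
  have hfmono : MonotoneOn f (Set.Icc q p) := by
    apply monotoneOn_of_deriv_nonneg (convex_Icc q p)
    · intro x hx
      exact (hfd x (hsub hx)).continuousAt.continuousWithinAt
    · intro x hx
      rw [interior_Icc] at hx
      exact (hfd x (hsub (Set.mem_Icc_of_Ioo hx))).differentiableAt.differentiableWithinAt
    · intro x hx
      rw [interior_Icc] at hx
      rw [(hfd x (hsub (Set.mem_Icc_of_Ioo hx))).deriv]
      exact hgnn x (Set.mem_Icc_of_Ioo hx)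
  have hfq : f q = 0 := by simp [hfdef]
  have := hfmono (Set.left_mem_Icc.2 hqp) (Set.right_mem_Icc.2 hqp) hqp
  rw [hfq, hfdef] at this
  simp only [sub_nonneg] at this
  linarith [this]

lemma exp_mul_le_affine {t x : ℝ} (hx : x ∈ Set.Icc (0 : ℝ) 1) :
    Real.exp (t * x) ≤ 1 - x + x * Real.exp t := by
  have h := convexOn_exp.2 (Set.mem_univ (0 : ℝ)) (Set.mem_univ t)
    (by linarith [hx.2] : (0:ℝ) ≤ 1 - x) hx.1 (by ring)
  simp only [smul_eq_mul, mul_zero, Real.exp_zero, mul_one] at h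
  calc Real.exp (t * x) = Real.exp ((1 - x) * 0 + x * t) := by ring_nf
    _ ≤ (1 - x) * 1 + x * Real.exp t := by simpa using h
    _ = 1 - x + x * Real.exp t := by ring

open MeasureTheory ProbabilityTheory in
lemma mgf_le_affine {Ω : Type*} [MeasurableSpace Ω] {P : Measure Ω} [IsProbabilityMeasure P]
    {X : Ω → ℝ} (hm : Measurable X) (hb : ∀ᵐ ω ∂P, X ω ∈ Set.Icc (0 : ℝ) 1) (t : ℝ) :
    mgf X P t ≤ 1 - (∫ ω, X ω ∂P) + (∫ ω, X ω ∂P) * Real.exp t := by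
  have hXint : Integrable X P := by
    refine Integrable.mono' (integrable_const 1) hm.aestronglyMeasurable ?_
    filter_upwards [hb] with ω hω
    rw [Real.norm_eq_abs, abs_of_nonneg hω.1]
    exact hω.2
  have hexp_int : Integrable (fun ω => Real.exp (t * X ω)) P := by
    refine Integrable.mono' (integrable_const (Real.exp |t|))
      ((hm.const_mul t).exp.aestronglyMeasurable) ?_
    filter_upwards [hb] with ω hω
    rw [Real.norm_eq_abs, abs_of_pos (Real.exp_pos _)]
    apply Real.exp_le_exp.2
    calc t * X ω ≤ |t * X ω| := le_abs_self _
      _ = |t| * |X ω| := abs_mul _ _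
      _ ≤ |t| * 1 := by
          apply mul_le_mul_of_nonneg_left _ (abs_nonneg t)
          rw [abs_of_nonneg hω.1]; exact hω.2
      _ = |t| := mul_one _
  have hRint : Integrable (fun ω => 1 - X ω + X ω * Real.exp t) P :=
    ((integrable_const 1).sub hXint).add (hXint.mul_const _)
  have hmono : mgf X P t ≤ ∫ ω, (1 - X ω + X ω * Real.exp t) ∂P := by
    apply integral_mono_ae hexp_int hRint
    filter_upwards [hb] with ω hω
    exact exp_mul_le_affine hω
  calc mgf X P t ≤ ∫ ω, (1 - X ω + X ω * Real.exp t) ∂P := hmono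
    _ = 1 - (∫ ω, X ω ∂P) + (∫ ω, X ω ∂P) * Real.exp t := by
        have h1 : Integrable (fun ω => 1 - X ω) P := (integrable_const 1).sub hXint
        have h2 : Integrable (fun ω => X ω * Real.exp t) P := hXint.mul_const _
        rw [integral_add h1 h2,
          integral_sub (integrable_const 1) hXint, integral_const, integral_mul_const,
          probReal_univ, smul_eq_mul, one_mul]

open MeasureTheory ProbabilityTheory in
set_option maxHeartbeats 1000000 in
theorem chernoff_scaled_gap_bound {Ω : Type*} [MeasurableSpace Ω] (P : Measure Ω)
    [IsProbabilityMeasure P] (X : ℕ → Ω → ℝ) (μ c u Δ pmax γ : ℝ)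
    (hμ : μ ∈ Set.Ioc (0 : ℝ) 1) (hc : c ∈ Set.Icc μ 1)
    (hu : u ∈ Set.Icc (0 : ℝ) 1) (hΔ : Δ ∈ Set.Ioc 0 (1 - u))
    (hpmax : u + Δ / 2 ≤ pmax) (hpmax1 : pmax ≤ 1)
    (hγ : γ = max μ (1 - pmax))
    (hmeas : ∀ i, Measurable (X i))
    (hindep : iIndepFun X P)
    (hident : ∀ i, IdentDistrib (X i) (X 0) P P)
    (hbdd : ∀ i, ∀ᵐ ω ∂P, X i ω ∈ Set.Icc (0 : ℝ) 1)
    (hmean : ∀ i, ∫ ω, X i ω ∂P = c * u)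
    (N : ℕ) (hN : 0 < N) :
    P {ω | c * (u + Δ / 4) < (N : ℝ)⁻¹ * ∑ i ∈ Finset.range N, X i ω}
      ≤ ENNReal.ofReal (Real.exp (-(N : ℝ) * μ * γ * Δ ^ 2 / 8)) := by
  obtain ⟨hμ0, hμ1⟩ := hμ
  obtain ⟨hμc, hc1⟩ := hc
  obtain ⟨hu0, hu1⟩ := hu
  obtain ⟨hΔ0, hΔu⟩ := hΔ
  have hc0 : 0 < c := lt_of_lt_of_le hμ0 hμc
  set m : ℝ := c * u with hmdef
  set a : ℝ := c * (u + Δ / 4) with hadef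
  have hb0 : 0 < u + Δ / 4 := by linarith
  have ha0 : 0 < a := mul_pos hc0 hb0
  have hma : m < a := by rw [hmdef, hadef]; nlinarith
  have hm0 : 0 ≤ m := mul_nonneg hc0.le hu0
  have ha1 : a < 1 := by rw [hadef]; nlinarith
  have hm1 : m < 1 := lt_trans hma ha1
  have hγμ : μ ≤ γ := hγ ▸ le_max_left _ _
  have hγ0 : 0 < γ := lt_of_lt_of_le hμ0 hγμ
  -- key analytic claim
  obtain ⟨t, ht0, htkey⟩ : ∃ t : ℝ, 0 ≤ t ∧
      -t * a + Real.log (1 - m + m * Real.exp t) ≤ -(μ * γ * Δ ^ 2 / 8) := by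
    rcases eq_or_lt_of_le hu0 with hu_eq | hu_pos
    · -- u = 0, m = 0
      have hmz : m = 0 := by rw [hmdef, ← hu_eq, mul_zero]
      refine ⟨μ * γ * Δ ^ 2 / (8 * a), by positivity, ?_⟩
      rw [hmz]
      simp only [zero_mul, sub_zero, add_zero, Real.log_one]
      have heq : -(μ * γ * Δ ^ 2 / (8 * a)) * a = -(μ * γ * Δ ^ 2 / 8) := by
        field_simp
      linarith [heq]
    · -- u > 0, m > 0
      have hmpos : 0 < m := mul_pos hc0 hu_pos
      have h1m : 0 < 1 - m := by linarith
      have h1a : 0 < 1 - a := by linarith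
      refine ⟨Real.log (a * (1 - m) / ((1 - a) * m)), ?_, ?_⟩
      · apply Real.log_nonneg
        rw [le_div_iff₀ (by positivity)]
        nlinarith
      · have hexp_t : Real.exp (Real.log (a * (1 - m) / ((1 - a) * m)))
            = a * (1 - m) / ((1 - a) * m) := Real.exp_log (by positivity)
        have hB : 1 - m + m * (a * (1 - m) / ((1 - a) * m)) = (1 - m) / (1 - a) := by
          field_simp
          ring
        rw [hexp_t, hB]
        have hlogt : Real.log (a * (1 - m) / ((1 - a) * m))
            = Real.log a + Real.log (1 - m) - (Real.log (1 - a) + Real.log m) := by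
          rw [Real.log_div (by positivity) (by positivity),
            Real.log_mul (ne_of_gt ha0) (ne_of_gt h1m),
            Real.log_mul (ne_of_gt h1a) (ne_of_gt hmpos)]
        have hlogB : Real.log ((1 - m) / (1 - a)) = Real.log (1 - m) - Real.log (1 - a) :=
          Real.log_div (ne_of_gt h1m) (ne_of_gt h1a)
        rw [hlogt, hlogB]
        -- reduces to klBerR lower bound
        set V : ℝ := min a (1/4) with hVdef
        have hVpos : 0 < V := lt_min ha0 (by norm_num)
        have hVb : ∀ x ∈ Set.Icc m a, x * (1 - x) ≤ V := by
          intro x hx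
          have hx0 : 0 ≤ x := le_trans hm0 hx.1
          have hx1 : x < 1 := lt_of_le_of_lt hx.2 ha1
          apply le_min
          · nlinarith [hx.2]
          · nlinarith [sq_nonneg (1 - 2 * x)]
        have hkl := klBer_quad_lower hmpos hma.le ha1 hVpos hVb
        -- (a - m)^2/(2V) ≥ μ γ Δ²/8
        have hamc : a - m = c * Δ / 4 := by rw [hadef, hmdef]; ring
        have hc2 : 4 * μ * γ * V ≤ c ^ 2 := by
          rcases le_total (1 - pmax) μ with h | h
          · have hγeq : γ = μ := by rw [hγ, max_eq_left h]
            have hV4 : V ≤ 1 / 4 := min_le_right _ _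
            rw [hγeq]
            nlinarith [mul_le_mul_of_nonneg_left hV4 (by positivity : (0:ℝ) ≤ 4 * μ * μ)]
          · have hγeq : γ = 1 - pmax := by rw [hγ, max_eq_right h]
            have hVa : V ≤ a := min_le_left _ _
            have hble : u + Δ / 4 ≤ pmax := by linarith
            have h1p : 0 ≤ 1 - pmax := by linarith
            have hkey : (u + Δ / 4) * (1 - pmax) ≤ 1 / 4 := by
              have hk2 : (u + Δ / 4) * (1 - pmax) ≤ pmax * (1 - pmax) :=
                mul_le_mul_of_nonneg_right hble h1p
              nlinarith [sq_nonneg (2 * pmax - 1)]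
            rw [hγeq]
            have hstep : 4 * μ * (1 - pmax) * V ≤ 4 * μ * (1 - pmax) * a :=
              mul_le_mul_of_nonneg_left hVa (by positivity)
            rw [hadef] at hstep
            have h5 : 4 * μ * c * ((u + Δ / 4) * (1 - pmax)) ≤ 4 * μ * c * (1 / 4) :=
              mul_le_mul_of_nonneg_left hkey (by positivity)
            have h6 : μ * c ≤ c * c := mul_le_mul_of_nonneg_right hμc hc0.le
            nlinarith [hstep, h5, h6]
        have hquad : μ * γ * Δ ^ 2 / 8 ≤ (a - m) ^ 2 / (2 * V) := by
          rw [hamc, div_le_div_iff₀ (by norm_num) (by positivity)]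
          nlinarith [mul_le_mul_of_nonneg_left hc2 (sq_nonneg Δ)]
        have := le_trans hquad hkl
        linarith
  -- Chernoff machinery
  have hBpos : 0 < 1 - m + m * Real.exp t := by
    nlinarith [Real.one_le_exp ht0]
  have hint : ∀ i, Integrable (fun ω => Real.exp (t * X i ω)) P := by
    intro i
    refine Integrable.mono' (integrable_const (Real.exp t))
      ((hmeas i).const_mul t).exp.aestronglyMeasurable ?_
    filter_upwards [hbdd i] with ω hω
    rw [Real.norm_eq_abs, abs_of_pos (Real.exp_pos _)]
    exact Real.exp_le_exp.2 (by nlinarith [hω.1, hω.2])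
  have hSint : Integrable (fun ω => Real.exp (t * (∑ i ∈ Finset.range N, X i) ω)) P :=
    hindep.integrable_exp_mul_sum hmeas fun i _ => hint i
  have hNpos : (0 : ℝ) < N := Nat.cast_pos.2 hN
  have hmono : P {ω | c * (u + Δ / 4) < (N : ℝ)⁻¹ * ∑ i ∈ Finset.range N, X i ω}
      ≤ P {ω | (N : ℝ) * a ≤ (∑ i ∈ Finset.range N, X i) ω} := by
    apply measure_mono
    intro ω hω
    simp only [Set.mem_setOf_eq, Finset.sum_apply] at hω ⊢
    have h2 := mul_lt_mul_of_pos_right hω hNpos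
    have h3 : (N : ℝ)⁻¹ * (∑ i ∈ Finset.range N, X i ω) * N = ∑ i ∈ Finset.range N, X i ω := by
      field_simp
    rw [h3] at h2
    rw [hadef]
    linarith
  have hchern := measure_ge_le_exp_mul_mgf ((N : ℝ) * a) ht0 hSint
  have hmgf_prod : mgf (∑ i ∈ Finset.range N, X i) P t
      = ∏ i ∈ Finset.range N, mgf (X i) P t := hindep.mgf_sum hmeas _
  have hmgf_le : ∀ i, mgf (X i) P t ≤ 1 - m + m * Real.exp t := by
    intro i
    have h := mgf_le_affine (hmeas i) (hbdd i) t
    rw [hmean i] at h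
    exact h
  have hprod_le : ∏ i ∈ Finset.range N, mgf (X i) P t ≤ (1 - m + m * Real.exp t) ^ N := by
    calc ∏ i ∈ Finset.range N, mgf (X i) P t
        ≤ ∏ _i ∈ Finset.range N, (1 - m + m * Real.exp t) :=
          Finset.prod_le_prod (fun i _ => mgf_nonneg) (fun i _ => hmgf_le i)
      _ = (1 - m + m * Real.exp t) ^ N := by rw [Finset.prod_const, Finset.card_range]
  have hfinal : Real.exp (-t * ((N : ℝ) * a)) * (1 - m + m * Real.exp t) ^ N
      ≤ Real.exp (-(N : ℝ) * μ * γ * Δ ^ 2 / 8) := by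
    have hBexp : (1 - m + m * Real.exp t) ^ N
        = Real.exp ((N : ℝ) * Real.log (1 - m + m * Real.exp t)) := by
      rw [Real.exp_nat_mul, Real.exp_log hBpos]
    rw [hBexp, ← Real.exp_add, Real.exp_le_exp]
    have h4 : -t * ((N : ℝ) * a) + (N : ℝ) * Real.log (1 - m + m * Real.exp t)
        = (N : ℝ) * (-t * a + Real.log (1 - m + m * Real.exp t)) := by ring
    rw [h4]
    calc (N : ℝ) * (-t * a + Real.log (1 - m + m * Real.exp t))
        ≤ (N : ℝ) * (-(μ * γ * Δ ^ 2 / 8)) :=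
          mul_le_mul_of_nonneg_left htkey (Nat.cast_nonneg N)
      _ = -(N : ℝ) * μ * γ * Δ ^ 2 / 8 := by ring
  calc P {ω | c * (u + Δ / 4) < (N : ℝ)⁻¹ * ∑ i ∈ Finset.range N, X i ω}
      ≤ P {ω | (N : ℝ) * a ≤ (∑ i ∈ Finset.range N, X i) ω} := hmono
    _ = ENNReal.ofReal ((P {ω | (N : ℝ) * a ≤ (∑ i ∈ Finset.range N, X i) ω}).toReal) :=
        (ENNReal.ofReal_toReal (measure_ne_top _ _)).symm
    _ ≤ ENNReal.ofReal (Real.exp (-(N : ℝ) * μ * γ * Δ ^ 2 / 8)) := by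
        apply ENNReal.ofReal_le_ofReal
        refine le_trans hchern (le_trans ?_ hfinal)
        rw [hmgf_prod]
        exact mul_le_mul_of_nonneg_left hprod_le (Real.exp_nonneg _)
end

section
/- For c ∈ (0,1], p ∈ [0,1], and q₁ ≤ q₂ in [p, 1], the difference c·d(p,q) − d(c·p, c·q) is nondecreasing in q on [p, 1) ∩ {q : cq < 1}; in particular d(c·p, c·q) ≤ c·d(p,q) for all q ≥ p. -/
open scoped BigOperators

lemma klBerR_self (x : ℝ) : klBerR x x = 0 := by
  unfold klBerR
  rcases eq_or_ne x 0 with h | h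
  · simp [h]
  rcases eq_or_ne x 1 with h1 | h1
  · simp [h1]
  · rw [div_self h, div_self (by intro hh; apply h1; linarith)]; simp

lemma klBer_self (x : ℝ) (hx : x ≠ 0) : klBer x x = (0 : EReal) := by
  unfold klBer
  rw [if_neg (by rintro (⟨h, h'⟩ | ⟨h, h'⟩); exacts [hx h, h' h])]
  have h0 := klBerR_self x
  unfold klBerR at h0
  rw [h0]
  rfl

lemma aux_mono (c p : ℝ) (hc0 : 0 < c) (hc1 : c ≤ 1) (hp0 : 0 ≤ p) :
    MonotoneOn (fun q => (1 - c*p) * Real.log (1 - c*q) - c*(1-p) * Real.log (1 - q))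
      (Set.Ico p 1) := by
  have key : ∀ x ∈ Set.Ico p 1, (1:ℝ) - c*x ≠ 0 ∧ (1:ℝ) - x ≠ 0 := by
    intro x hx
    have hx0 : 0 ≤ x := le_trans hp0 hx.1
    have : c * x ≤ x := by nlinarith
    constructor <;> intro h <;> nlinarith [hx.2]
  apply monotoneOn_of_deriv_nonneg (convex_Ico p 1)
  · apply ContinuousOn.sub
    · exact continuousOn_const.mul ((continuousOn_const.sub
        ((continuous_const.mul continuous_id).continuousOn)).log fun x hx => (key x hx).1)
    · exact continuousOn_const.mul ((continuousOn_const.sub continuousOn_id).log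
        fun x hx => (key x hx).2)
  · intro x hx
    rw [interior_Ico] at hx
    obtain ⟨h1, h2⟩ := key x (Set.Ioo_subset_Ico_self hx)
    have d1 : HasDerivAt (fun q : ℝ => 1 - c*q) (0 - c*1) x :=
      (hasDerivAt_const x (1:ℝ)).sub ((hasDerivAt_id x).const_mul c)
    have d2 : HasDerivAt (fun q : ℝ => 1 - q) (0 - 1) x :=
      (hasDerivAt_const x (1:ℝ)).sub (hasDerivAt_id x)
    exact ((((Real.hasDerivAt_log h1).comp x d1).const_mul _).sub
      (((Real.hasDerivAt_log h2).comp x d2).const_mul _)).differentiableAt.differentiableWithinAt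
  · intro x hx
    rw [interior_Ico] at hx
    have hx0 : 0 ≤ x := le_trans hp0 hx.1.le
    have hcx : 0 < 1 - c*x := by nlinarith [hx.2]
    have hxx : (0:ℝ) < 1 - x := by linarith [hx.2]
    have d1 : HasDerivAt (fun q : ℝ => 1 - c*q) (0 - c*1) x :=
      (hasDerivAt_const x (1:ℝ)).sub ((hasDerivAt_id x).const_mul c)
    have d2 : HasDerivAt (fun q : ℝ => 1 - q) (0 - 1) x :=
      (hasDerivAt_const x (1:ℝ)).sub (hasDerivAt_id x)
    have hD : HasDerivAt (fun q => (1 - c*p) * Real.log (1 - c*q) - c*(1-p) * Real.log (1 - q))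
        ((1 - c*p) * ((1 - c*x)⁻¹ * (0 - c*1)) - c*(1-p) * ((1 - x)⁻¹ * (0 - 1))) x :=
      (((Real.hasDerivAt_log hcx.ne').comp x d1).const_mul ((1:ℝ) - c*p)).sub
        (((Real.hasDerivAt_log hxx.ne').comp x d2).const_mul (c*(1-p)))
    rw [hD.deriv]
    have heq : (1 - c*p) * ((1 - c*x)⁻¹ * (0 - c*1)) - c*(1-p) * ((1 - x)⁻¹ * (0 - 1))
        = c*(1-p) / (1-x) - c*(1-c*p) / (1-c*x) := by
      field_simp
      ring
    rw [heq, sub_nonneg, div_le_div_iff₀ hcx hxx]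
    nlinarith [mul_nonneg (mul_nonneg hc0.le (sub_nonneg.mpr hc1)) (sub_nonneg.mpr hx.1.le)]

lemma f_eq (c p : ℝ) (hc0 : 0 < c) (hc1 : c ≤ 1) (hp0 : 0 ≤ p) (hp1 : p < 1)
    (q : ℝ) (hq : q ∈ Set.Ico p 1) :
    c * klBerR p q - klBerR (c * p) (c * q) =
      (c*(1-p) * Real.log (1-p) - (1 - c*p) * Real.log (1 - c*p)) +
      ((1 - c*p) * Real.log (1 - c*q) - c*(1-p) * Real.log (1 - q)) := by
  have hq0 : 0 ≤ q := le_trans hp0 hq.1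
  have hq1 : (0:ℝ) < 1 - q := by linarith [hq.2]
  have hcq : (0:ℝ) < 1 - c*q := by nlinarith [hq.2]
  have hcp : (0:ℝ) < 1 - c*p := by nlinarith
  have hp1' : (0:ℝ) < 1 - p := by linarith
  unfold klBerR
  rw [mul_div_mul_left p q hc0.ne', Real.log_div hp1'.ne' hq1.ne',
    Real.log_div hcp.ne' hcq.ne']
  ring

theorem kl_diff_monotone (c p : ℝ) (hc : c ∈ Set.Ioc (0 : ℝ) 1)
    (hp : p ∈ Set.Icc (0 : ℝ) 1) :
    MonotoneOn (fun q => c * klBerR p q - klBerR (c * p) (c * q))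
      (Set.Ico p 1 ∩ {q | c * q < 1}) ∧
    ∀ q ∈ Set.Icc p 1, klBer (c * p) (c * q) ≤ (c : EReal) * klBer p q := by
  obtain ⟨hc0, hc1⟩ := hc
  obtain ⟨hp0, hp1⟩ := hp
  have hmono : MonotoneOn (fun q => c * klBerR p q - klBerR (c * p) (c * q))
      (Set.Ico p 1 ∩ {q | c * q < 1}) := by
    intro a ha b hb hab
    have ha' : a ∈ Set.Ico p 1 := ha.1
    have hb' : b ∈ Set.Ico p 1 := hb.1
    have hplt : p < 1 := lt_of_le_of_lt ha'.1 ha'.2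
    simp only
    rw [f_eq c p hc0 hc1 hp0 hplt a ha', f_eq c p hc0 hc1 hp0 hplt b hb']
    exact add_le_add_right (aux_mono c p hc0 hc1 hp0 ha' hb' hab) _
  refine ⟨hmono, ?_⟩
  intro q hq
  rcases eq_or_lt_of_le hq.2 with hq1 | hq1
  · -- q = 1
    subst hq1
    rcases eq_or_lt_of_le hp1 with hp1' | hp1'
    · -- p = 1
      subst hp1'
      rw [mul_one, klBer_self c hc0.ne', klBer_self 1 one_ne_zero, mul_zero]
    · -- p < 1
      have h1 : klBer p 1 = ⊤ := by
        unfold klBer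
        rw [if_pos (Or.inr ⟨rfl, hp1'.ne⟩)]
      rw [h1]
      have : (c : EReal) * ⊤ = ⊤ := by
        rw [EReal.mul_top_of_pos]
        exact_mod_cast hc0
      rw [this]
      exact le_top
  · -- q < 1
    have hq0 : 0 ≤ q := le_trans hp0 hq.1
    have hcq : c * q < 1 := by nlinarith
    have e1 : klBer p q = ((klBerR p q : ℝ) : EReal) := by
      unfold klBer klBerR
      rw [if_neg]
      push_neg
      constructor
      · intro h; subst h; linarith [hq.1]
      · intro h; exact absurd h hq1.ne
    have e2 : klBer (c*p) (c*q) = ((klBerR (c*p) (c*q) : ℝ) : EReal) := by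
      unfold klBer klBerR
      rw [if_neg]
      push_neg
      constructor
      · intro h
        have hq00 : q = 0 := by
          rcases mul_eq_zero.mp h with h' | h'
          · exact absurd h' hc0.ne'
          · exact h'
        subst hq00
        have : p = 0 := le_antisymm (by linarith [hq.1]) hp0
        rw [this, mul_zero]
      · intro h; exact absurd h hcq.ne
    rw [e1, e2, ← EReal.coe_mul, EReal.coe_le_coe_iff]
    have hplt : p < 1 := lt_of_le_of_lt hq.1 hq1
    have hpS : p ∈ Set.Ico p 1 ∩ {q | c * q < 1} := by
      refine ⟨⟨le_refl p, hplt⟩, ?_⟩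
      show c * p < 1
      nlinarith
    have hqS : q ∈ Set.Ico p 1 ∩ {q | c * q < 1} := ⟨⟨hq.1, hq1⟩, hcq⟩
    have := hmono hpS hqS hq.1
    simp only at this
    rw [klBerR_self, klBerR_self, mul_zero, sub_zero] at this
    linarith
end
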